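/- Let 0 < e < 1, h, δ > 0 and 0 < m < m₀ := (1−√e)²/(h+δ). Then the quadratic (h+δ)x² + [m(h+δ) + e − 1]x + me = 0 has two distinct positive real roots ū₁ > ū₂ > 0 given by ū_{1,2} = [1−e−m(h+δ) ± √Δ₁(m)]/(2(h+δ)), where Δ₁(m) = [m(h+δ)+e−1]² − 4(h+δ)me > 0. -/

import Mathlib

open Real

/-- For 0 < e < 1, h, δ > 0 and 0 < m < m₀ = (1−√e)²/(h+δ), the
quadratic (h+δ)x² + [m(h+δ)+e−1]x + me = 0 has two distinct positive roots
ū₁ > ū₂ > 0 given by the quadratic formula, with positive discriminant Δ₁(m). -/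
theorem stmt3 (e h δ m : ℝ) (he0 : 0 < e) (he1 : e < 1) (hh : 0 < h) (hδ : 0 < δ)
    (hm0 : 0 < m) (hm1 : m < (1 - Real.sqrt e) ^ 2 / (h + δ)) :
    let Δ₁ := (m * (h + δ) + e - 1) ^ 2 - 4 * (h + δ) * (m * e)
    let u₁ := (1 - e - m * (h + δ) + Real.sqrt Δ₁) / (2 * (h + δ))
    let u₂ := (1 - e - m * (h + δ) - Real.sqrt Δ₁) / (2 * (h + δ))
    0 < Δ₁ ∧ 0 < u₂ ∧ u₂ < u₁ ∧
    (h + δ) * u₁ ^ 2 + (m * (h + δ) + e - 1) * u₁ + m * e = 0 ∧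
    (h + δ) * u₂ ^ 2 + (m * (h + δ) + e - 1) * u₂ + m * e = 0 ∧
    (∀ x : ℝ, (h + δ) * x ^ 2 + (m * (h + δ) + e - 1) * x + m * e = 0 →
      x = u₁ ∨ x = u₂) := by
  intro Δ₁ u₁ u₂
  have hA : 0 < h + δ := by linarith
  set s := Real.sqrt e with hs
  have hs2 : s ^ 2 = e := Real.sq_sqrt he0.le
  have hs0 : 0 < s := Real.sqrt_pos.mpr he0
  have hs1 : s < 1 := by rw [hs]; exact by { rw [show (1:ℝ) = Real.sqrt 1 from (Real.sqrt_one).symm]; exact Real.sqrt_lt_sqrt he0.le he1 }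
  have ht : m * (h + δ) < (1 - s) ^ 2 := (lt_div_iff₀ hA).mp hm1
  have ht0 : 0 < m * (h + δ) := mul_pos hm0 hA
  have hΔ : 0 < Δ₁ := by
    have hfac : Δ₁ = ((1 - s) ^ 2 - m * (h + δ)) * ((1 + s) ^ 2 - m * (h + δ)) := by
      simp only [Δ₁]; nlinarith [hs2]
    rw [hfac]
    exact mul_pos (by linarith) (by nlinarith)
  have hsq2 : Real.sqrt Δ₁ ^ 2 = Δ₁ := Real.sq_sqrt hΔ.le
  have hsqpos : 0 < Real.sqrt Δ₁ := Real.sqrt_pos.mpr hΔ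
  have hse : e ≤ s := by nlinarith
  have hpos : 0 < 1 - e - m * (h + δ) := by nlinarith
  have hlt : Real.sqrt Δ₁ < 1 - e - m * (h + δ) := by
    have h2 : Δ₁ < (1 - e - m * (h + δ)) ^ 2 := by
      simp only [Δ₁]; nlinarith [mul_pos ht0 he0]
    nlinarith [Real.sqrt_nonneg Δ₁, hsq2]
  have hu2 : 0 < u₂ := div_pos (by linarith) (by linarith)
  have hu21 : u₂ < u₁ := by
    apply (div_lt_div_iff_of_pos_right (by linarith : (0:ℝ) < 2 * (h + δ))).mpr
    linarith
  have hq2 : Real.sqrt Δ₁ ^ 2 = (m * (h + δ) + e - 1) ^ 2 - 4 * (h + δ) * (m * e) := hsq2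
  have hAne : (h + δ) ≠ 0 := hA.ne'
  have hr1 : (h + δ) * u₁ ^ 2 + (m * (h + δ) + e - 1) * u₁ + m * e = 0 := by
    simp only [u₁]
    field_simp
    linear_combination hq2
  have hr2 : (h + δ) * u₂ ^ 2 + (m * (h + δ) + e - 1) * u₂ + m * e = 0 := by
    simp only [u₂]
    field_simp
    linear_combination hq2
  refine ⟨hΔ, hu2, hu21, hr1, hr2, ?_⟩
  intro x hx
  have hfac : (h + δ) * ((x - u₁) * (x - u₂)) = 0 := by
    simp only [u₁, u₂]
    field_simp
    linear_combination (4 * (h + δ)) * hx - hq2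
  rcases mul_eq_zero.mp hfac with h0 | h0
  · linarith
  · rcases mul_eq_zero.mp h0 with h1 | h1
    · left; linarith
    · right; linarith
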